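/- Suppose f: [0,∞) → (0,∞) is continuous and f(x) ~ e^{−αx} as x → ∞ for some α > 0. Let F(x) = ∫₁ˣ du/f(u). Then F⁻¹(x) ~ (1/α) log x as x → ∞. -/

import Mathlib

open Filter Real Set

theorem stmt_13 (f F Finv : ℝ → ℝ) (α : ℝ)
    (hα : 0 < α)
    (hf_cont : ContinuousOn f (Set.Ici 0))
    (hf_pos : ∀ x ∈ Set.Ici (0:ℝ), 0 < f x)
    (hasym : Tendsto (fun x => f x * Real.exp (α * x)) atTop (nhds 1))
    (hF : ∀ x > (0:ℝ), F x = ∫ u in (1:ℝ)..x, 1 / f u)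
    (hFinv_right : ∀ t ≥ (0:ℝ), F (Finv t) = t)
    (hFinv_ge : ∀ t ≥ (0:ℝ), 1 ≤ Finv t)
    (hFinv_left : ∀ x ≥ (1:ℝ), Finv (F x) = x) :
    Tendsto (fun x => Finv x / ((1 / α) * Real.log x)) atTop (nhds 1) := by
  -- continuity and integrability of 1/f
  have hcont : ContinuousOn (fun u => 1 / f u) (Set.Ici 0) :=
    continuousOn_const.div hf_cont (fun x hx => (hf_pos x hx).ne')
  have hint : ∀ a b : ℝ, 0 ≤ a → 0 ≤ b →
      IntervalIntegrable (fun u => 1 / f u) MeasureTheory.volume a b := by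
    intro a b ha hb
    apply (hcont.mono ?_).intervalIntegrable
    intro x hx
    rcases le_total a b with h | h
    · rw [Set.uIcc_of_le h] at hx; exact le_trans ha hx.1
    · rw [Set.uIcc_of_ge h] at hx; exact le_trans hb hx.1
  -- F is monotone on [1, ∞)
  have hFmono : ∀ a b : ℝ, 1 ≤ a → a ≤ b → F a ≤ F b := by
    intro a b ha hab
    rw [hF a (by linarith), hF b (by linarith),
      ← intervalIntegral.integral_add_adjacent_intervals
        (hint 1 a one_pos.le (by linarith)) (hint a b (by linarith) (by linarith))]
    have h0 : 0 ≤ ∫ u in a..b, 1 / f u := by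
      apply intervalIntegral.integral_nonneg hab
      intro u hu
      exact le_of_lt (one_div_pos.2 (hf_pos u (by simp only [Set.mem_Ici]; linarith [hu.1])))
    linarith
  -- pick X ≥ 1 beyond which 1/2 ≤ f u * exp(αu) ≤ 2
  have hev : ∀ᶠ u in atTop, (1/2 ≤ f u * Real.exp (α*u) ∧ f u * Real.exp (α*u) ≤ 2) ∧ 1 ≤ u := by
    have hlo := hasym.eventually (eventually_ge_nhds (by norm_num : (1/2:ℝ) < 1))
    have hhi := hasym.eventually (eventually_le_nhds (by norm_num : (1:ℝ) < 2))
    filter_upwards [hlo, hhi, eventually_ge_atTop (1:ℝ)] with u h1 h2 h3 using ⟨⟨h1, h2⟩, h3⟩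
  obtain ⟨X, hX⟩ := eventually_atTop.1 hev
  have hX1 : (1:ℝ) ≤ X := (hX X le_rfl).2
  -- pointwise bounds on 1/f
  have hlb : ∀ u ≥ X, (1/2) * Real.exp (α*u) ≤ 1 / f u := by
    intro u hu
    have hfu : 0 < f u := hf_pos u (by simp only [Set.mem_Ici]; linarith [(hX u hu).2])
    rw [le_div_iff₀ hfu]
    nlinarith [(hX u hu).1.2, Real.exp_pos (α*u)]
  have hub : ∀ u ≥ X, 1 / f u ≤ 2 * Real.exp (α*u) := by
    intro u hu
    have hfu : 0 < f u := hf_pos u (by simp only [Set.mem_Ici]; linarith [(hX u hu).2])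
    rw [div_le_iff₀ hfu]
    nlinarith [(hX u hu).1.1, Real.exp_pos (α*u)]
  -- FTC: integral of c * exp(α u)
  have hexp_int : ∀ c a b : ℝ, (∫ u in a..b, c * Real.exp (α*u))
      = (c/α) * (Real.exp (α*b) - Real.exp (α*a)) := by
    intro c a b
    have hderiv : ∀ u : ℝ, HasDerivAt (fun u => (c/α) * Real.exp (α*u)) (c * Real.exp (α*u)) u := by
      intro u
      have h := (((hasDerivAt_id u).const_mul α).exp).const_mul (c/α)
      refine h.congr_deriv ?_
      field_simp
      simp
    rw [intervalIntegral.integral_eq_sub_of_hasDerivAt (fun u _ => hderiv u)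
      (Continuous.intervalIntegrable (continuous_const.mul (Real.continuous_exp.comp (continuous_const.mul continuous_id))) a b)]
    ring
  have hFX0 : 0 ≤ F X := by
    rw [hF X (by linarith)]
    apply intervalIntegral.integral_nonneg hX1
    intro u hu
    exact le_of_lt (one_div_pos.2 (hf_pos u (by simp only [Set.mem_Ici]; linarith [hu.1])))
  -- two-sided bounds on F
  have key : ∀ x ≥ X, F X + ((1/2)/α) * (Real.exp (α*x) - Real.exp (α*X)) ≤ F x ∧
      F x ≤ F X + (2/α) * (Real.exp (α*x) - Real.exp (α*X)) := by
    intro x hx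
    have hsplit : F x = F X + ∫ u in X..x, 1 / f u := by
      rw [hF x (by linarith), hF X (by linarith),
        ← intervalIntegral.integral_add_adjacent_intervals
          (hint 1 X one_pos.le (by linarith)) (hint X x (by linarith) (by linarith))]
    have hlo : (∫ u in X..x, (1/2) * Real.exp (α*u)) ≤ ∫ u in X..x, 1 / f u := by
      apply intervalIntegral.integral_mono_on hx
        (Continuous.intervalIntegrable (continuous_const.mul (Real.continuous_exp.comp (continuous_const.mul continuous_id))) X x)
        (hint X x (by linarith) (by linarith))
      intro u hu; exact hlb u hu.1
    have hhi : (∫ u in X..x, 1 / f u) ≤ ∫ u in X..x, 2 * Real.exp (α*u) := by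
      apply intervalIntegral.integral_mono_on hx
        (hint X x (by linarith) (by linarith))
        (Continuous.intervalIntegrable (continuous_const.mul (Real.continuous_exp.comp (continuous_const.mul continuous_id))) X x)
      intro u hu; exact hub u hu.1
    rw [hexp_int] at hlo hhi
    constructor <;> linarith
  -- eventual log bounds
  set c₁ : ℝ := Real.log (1/(4*α)) with hc₁
  set c₂ : ℝ := Real.log (F X + 2/α) with hc₂
  have hlog : ∀ᶠ x in atTop, α*x + c₁ ≤ Real.log (F x) ∧ Real.log (F x) ≤ α*x + c₂ := by
    filter_upwards [eventually_ge_atTop (X + Real.log 2 / α)] with x hx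
    have hxX : X ≤ x := by
      have : 0 ≤ Real.log 2 / α := div_nonneg (Real.log_nonneg one_le_two) hα.le
      linarith
    obtain ⟨klo, khi⟩ := key x hxX
    have hexp2 : 2 * Real.exp (α*X) ≤ Real.exp (α*x) := by
      have : Real.exp (α * (X + Real.log 2 / α)) ≤ Real.exp (α*x) :=
        Real.exp_le_exp.2 (by nlinarith)
      calc 2 * Real.exp (α*X) = Real.exp (α*X + Real.log 2) := by
            rw [Real.exp_add, Real.exp_log two_pos]; ring
        _ ≤ Real.exp (α*x) := by
            rw [show α*X + Real.log 2 = α * (X + Real.log 2 / α) by field_simp]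
            exact this
    have hFx_lb : (1/(4*α)) * Real.exp (α*x) ≤ F x := by
      have h1 : ((1/2)/α) * (Real.exp (α*x) - Real.exp (α*X)) ≥ ((1/2)/α) * (Real.exp (α*x)/2) := by
        apply mul_le_mul_of_nonneg_left _ (by positivity)
        linarith
      have : ((1/2)/α) * (Real.exp (α*x)/2) = (1/(4*α)) * Real.exp (α*x) := by ring
      linarith
    have hFx_pos : 0 < F x := lt_of_lt_of_le (by positivity) hFx_lb
    have hexp1 : (1:ℝ) ≤ Real.exp (α*x) := Real.one_le_exp (by nlinarith)
    constructor
    · calc α*x + c₁ = Real.log ((1/(4*α)) * Real.exp (α*x)) := by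
            rw [Real.log_mul (by positivity) (Real.exp_ne_zero _), Real.log_exp, hc₁]; ring
        _ ≤ Real.log (F x) := Real.log_le_log (by positivity) hFx_lb
    · have hFx_ub : F x ≤ (F X + 2/α) * Real.exp (α*x) := by
        have h2 : (2/α) * (Real.exp (α*x) - Real.exp (α*X)) ≤ (2/α) * Real.exp (α*x) := by
          apply mul_le_mul_of_nonneg_left _ (by positivity)
          linarith [Real.exp_pos (α*X)]
        nlinarith [Real.exp_pos (α*x)]
      calc Real.log (F x) ≤ Real.log ((F X + 2/α) * Real.exp (α*x)) :=
            Real.log_le_log hFx_pos hFx_ub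
        _ = α*x + c₂ := by
            rw [Real.log_mul (by positivity) (Real.exp_ne_zero _), Real.log_exp, hc₂]; ring
  -- ratio tendsto 1
  have hαx : Tendsto (fun x : ℝ => α * x) atTop atTop :=
    (tendsto_id (α := ℝ)).const_mul_atTop hα
  have hzero : ∀ c : ℝ, Tendsto (fun x => c / (α * x)) atTop (nhds 0) :=
    fun c => Tendsto.div_atTop tendsto_const_nhds hαx
  have hratio : Tendsto (fun x => Real.log (F x) / (α * x)) atTop (nhds 1) := by
    have hg1 : Tendsto (fun x => 1 + c₁ / (α * x)) atTop (nhds 1) := by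
      simpa using tendsto_const_nhds.add (hzero c₁)
    have hg2 : Tendsto (fun x => 1 + c₂ / (α * x)) atTop (nhds 1) := by
      simpa using tendsto_const_nhds.add (hzero c₂)
    apply tendsto_of_tendsto_of_tendsto_of_le_of_le' hg1 hg2
    · filter_upwards [hlog, eventually_gt_atTop (0:ℝ)] with x hl hx
      have hax : 0 < α * x := by positivity
      rw [show (1:ℝ) + c₁/(α*x) = (α*x + c₁)/(α*x) by field_simp]
      gcongr
      exact hl.1
    · filter_upwards [hlog, eventually_gt_atTop (0:ℝ)] with x hl hx
      have hax : 0 < α * x := by positivity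
      rw [show (1:ℝ) + c₂/(α*x) = (α*x + c₂)/(α*x) by field_simp]
      gcongr
      exact hl.2
  have hg : Tendsto (fun x => α * x / Real.log (F x)) atTop (nhds 1) := by
    have := hratio.inv₀ one_ne_zero
    simpa [inv_div] using this
  -- Finv tends to atTop
  have hFinv_top : Tendsto Finv atTop atTop := by
    rw [tendsto_atTop]
    intro M
    filter_upwards [eventually_ge_atTop (max (F (max M 1) + 1) 0)] with t ht
    have ht0 : 0 ≤ t := le_trans (le_max_right _ _) ht
    by_contra h
    push_neg at h
    have h1 : Finv t ≤ max M 1 := le_trans h.le (le_max_left _ _)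
    have h2 := hFmono (Finv t) (max M 1) (hFinv_ge t ht0) h1
    rw [hFinv_right t ht0] at h2
    have h3 : F (max M 1) + 1 ≤ t := le_trans (le_max_left _ _) ht
    linarith
  -- compose and conclude
  apply Tendsto.congr' ?_ (hg.comp hFinv_top)
  filter_upwards [eventually_ge_atTop (0:ℝ)] with t ht
  simp only [Function.comp_apply]
  rw [hFinv_right t ht, div_eq_mul_inv, div_eq_mul_inv, mul_inv, one_div, inv_inv]
  ring
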